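/- Let l : ℝ → ℝ≥0 be strictly convex, and let μ be a probability measure on ℝ with continuous density f₀ supported on a compact interval I₀, with f₀ ≥ δ > 0 on a subinterval [l,u] ⊆ I₀ with l < t₀ < u. Define y(x) = sign(x − t₀). Then the function c ↦ E_{x∼μ}[ l( y(x) · (x − c) ) ] is strictly convex on ℝ. -/

import Mathlib

open MeasureTheory

theorem stmt_3 (l : ℝ → ℝ) (f₀ : ℝ → ℝ) (a b lo u δ t₀ : ℝ)
    (hl_convex : StrictConvexOn ℝ Set.univ l) (hl_nonneg : ∀ z, 0 ≤ l z)
    (hf_cont : ContinuousOn f₀ (Set.Icc a b))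
    (hf_supp : ∀ x, x ∉ Set.Icc a b → f₀ x = 0)
    (hf_nonneg : ∀ x, 0 ≤ f₀ x)
    (hf_prob : ∫ x, f₀ x = 1)
    (hsub : Set.Icc lo u ⊆ Set.Icc a b)
    (hδ : 0 < δ) (hlo : lo < t₀) (hu : t₀ < u)
    (hf_lb : ∀ x ∈ Set.Icc lo u, δ ≤ f₀ x) :
    StrictConvexOn ℝ Set.univ
      (fun c => ∫ x, l (Real.sign (x - t₀) * (x - c)) * f₀ x) := by
  -- continuity of l
  have hl_cont : Continuous l := by
    exact continuousOn_univ.mp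
      (ConvexOn.continuousOn isOpen_univ hl_convex.convexOn)
  -- measurability of sign
  have hsign : Measurable Real.sign := by
    have : Real.sign = fun r : ℝ => if r < 0 then (-1 : ℝ) else if 0 < r then 1 else 0 := rfl
    rw [this]
    exact Measurable.ite (measurableSet_lt measurable_id measurable_const)
      measurable_const (Measurable.ite (measurableSet_lt measurable_const measurable_id)
        measurable_const measurable_const)
  -- measurability of f₀
  have hf₀_eq : f₀ = (Set.Icc a b).indicator f₀ := by
    funext x
    by_cases hx : x ∈ Set.Icc a b
    · simp [Set.indicator_of_mem hx]
    · simp [Set.indicator_of_notMem hx, hf_supp x hx]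
  have hf₀_meas : AEStronglyMeasurable f₀ (volume : Measure ℝ) := by
    rw [hf₀_eq]
    exact (aestronglyMeasurable_indicator_iff measurableSet_Icc).mpr
      (hf_cont.aestronglyMeasurable measurableSet_Icc)
  -- bound for f₀
  have hab : a ≤ b := by
    have h1 := hsub ⟨le_refl lo, (hlo.trans hu).le⟩
    exact h1.1.trans h1.2
  obtain ⟨M, hM⟩ := (isCompact_Icc (a := a) (b := b)).exists_bound_of_continuousOn hf_cont
  have hMbd : ∀ x, |f₀ x| ≤ max M 0 := by
    intro x
    by_cases hx : x ∈ Set.Icc a b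
    · exact le_trans (hM x hx) (le_max_left _ _)
    · simp [hf_supp x hx]
  -- integrability of the integrand for each c
  have key_int : ∀ c : ℝ, Integrable
      (fun x => l (Real.sign (x - t₀) * (x - c)) * f₀ x) (volume : Measure ℝ) := by
    intro c
    have hmeas : AEStronglyMeasurable
        (fun x => l (Real.sign (x - t₀) * (x - c)) * f₀ x) (volume : Measure ℝ) := by
      refine AEStronglyMeasurable.mul ?_ hf₀_meas
      exact (hl_cont.measurable.comp
        (((hsign.comp ((measurable_id.sub measurable_const)))).mul
          (measurable_id.sub measurable_const))).aestronglyMeasurable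
    set R : ℝ := max |a - c| |b - c| with hR
    obtain ⟨C, hC⟩ := (isCompact_Icc (a := -R) (b := R)).exists_bound_of_continuousOn
      hl_cont.continuousOn
    have heq : (fun x => l (Real.sign (x - t₀) * (x - c)) * f₀ x)
        = (Set.Icc a b).indicator (fun x => l (Real.sign (x - t₀) * (x - c)) * f₀ x) := by
      funext x
      by_cases hx : x ∈ Set.Icc a b
      · simp [Set.indicator_of_mem hx]
      · simp [Set.indicator_of_notMem hx, hf_supp x hx]
    rw [heq, integrable_indicator_iff measurableSet_Icc]
    refine Integrable.mono' (g := fun _ => |C| * max M 0)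
      ((integrableOn_const_iff).mpr (Or.inr measure_Icc_lt_top)) hmeas.restrict ?_
    filter_upwards [ae_restrict_mem measurableSet_Icc] with x hx
    have harg : Real.sign (x - t₀) * (x - c) ∈ Set.Icc (-R) R := by
      have hRa : |a - c| ≤ R := le_max_left _ _
      have hRb : |b - c| ≤ R := le_max_right _ _
      have hs : |Real.sign (x - t₀)| ≤ 1 := by
        rcases Real.sign_apply_eq (x - t₀) with h | h | h <;> rw [h] <;> norm_num
      have hxc : |x - c| ≤ R := by
        rw [abs_le]
        constructor
        · linarith [neg_le_abs (a - c), hx.1]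
        · linarith [le_abs_self (b - c), hx.2]
      have h1 : |Real.sign (x - t₀) * (x - c)| ≤ R := by
        rw [abs_mul]
        calc |Real.sign (x - t₀)| * |x - c| ≤ 1 * R :=
              mul_le_mul hs hxc (abs_nonneg _) zero_le_one
          _ = R := one_mul R
      exact abs_le.mp h1
    calc ‖l (Real.sign (x - t₀) * (x - c)) * f₀ x‖
        = ‖l (Real.sign (x - t₀) * (x - c))‖ * ‖f₀ x‖ := norm_mul _ _
      _ ≤ |C| * max M 0 := by
          refine mul_le_mul ((hC _ harg).trans (le_abs_self C)) (hMbd x) (norm_nonneg _)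
            (abs_nonneg _)
  -- pointwise convexity facts
  refine ⟨convex_univ, ?_⟩
  intro c₁ _ c₂ _ hne p q hp hq hpq
  set cm : ℝ := p • c₁ + q • c₂ with hcm
  have hcm' : cm = p * c₁ + q * c₂ := by simp [hcm, smul_eq_mul]
  -- the difference function
  set φ : ℝ → ℝ → ℝ := fun c x => l (Real.sign (x - t₀) * (x - c)) with hφ
  set H : ℝ → ℝ := fun x =>
    p * (φ c₁ x * f₀ x) + q * (φ c₂ x * f₀ x) - φ cm x * f₀ x with hH
  have hdecomp : ∀ x, Real.sign (x - t₀) * (x - cm)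
      = p • (Real.sign (x - t₀) * (x - c₁)) + q • (Real.sign (x - t₀) * (x - c₂)) := by
    intro x
    have hx' : x - cm = p * (x - c₁) + q * (x - c₂) := by
      rw [hcm']; linear_combination (-x) * hpq
    simp only [smul_eq_mul]
    rw [hx']; ring
  have hHnonneg : ∀ x, 0 ≤ H x := by
    intro x
    have hconv := hl_convex.convexOn.2 (Set.mem_univ (Real.sign (x - t₀) * (x - c₁)))
      (Set.mem_univ (Real.sign (x - t₀) * (x - c₂))) hp.le hq.le hpq
    simp only [smul_eq_mul] at hconv
    have h1 : φ cm x ≤ p * φ c₁ x + q * φ c₂ x := by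
      rw [hφ]; dsimp only
      rw [hdecomp x]
      simpa [smul_eq_mul] using hconv
    have h2 : φ cm x * f₀ x ≤ (p * φ c₁ x + q * φ c₂ x) * f₀ x :=
      mul_le_mul_of_nonneg_right h1 (hf_nonneg x)
    simp only [hH]
    nlinarith [hf_nonneg x]
  -- strict positivity at points x ≠ t₀ with positive density
  have hHpos' : ∀ x, x ≠ t₀ → 0 < f₀ x → 0 < H x := by
    intro x hx hfx
    have hs : Real.sign (x - t₀) ≠ 0 := by
      simp [Real.sign_eq_zero_iff, sub_eq_zero, hx]
    have hne' : Real.sign (x - t₀) * (x - c₁) ≠ Real.sign (x - t₀) * (x - c₂) := by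
      intro h
      apply hne
      have := mul_left_cancel₀ hs h
      linarith
    have hconv := hl_convex.2 (Set.mem_univ (Real.sign (x - t₀) * (x - c₁)))
      (Set.mem_univ (Real.sign (x - t₀) * (x - c₂))) hne' hp hq hpq
    simp only [smul_eq_mul] at hconv
    have h1 : φ cm x < p * φ c₁ x + q * φ c₂ x := by
      rw [hφ]; dsimp only
      rw [hdecomp x]
      simpa [smul_eq_mul] using hconv
    simp only [hH]
    nlinarith
  -- integrability of H
  have hHint : Integrable H (volume : Measure ℝ) := by
    simp only [hH]
    exact (((key_int c₁).const_mul p).add ((key_int c₂).const_mul q)).sub (key_int cm)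
  -- pick x₀
  set x₀ : ℝ := (t₀ + u) / 2 with hx₀
  have hx₀t : t₀ < x₀ := by rw [hx₀]; linarith
  have hx₀u : x₀ < u := by rw [hx₀]; linarith
  have hx₀mem : x₀ ∈ Set.Icc lo u := ⟨by linarith, hx₀u.le⟩
  have ha_lo : a ≤ lo := (hsub ⟨le_refl lo, by linarith⟩).1
  have hu_b : u ≤ b := (hsub ⟨by linarith, le_refl u⟩).2
  have hx₀ab : a < x₀ ∧ x₀ < b := ⟨by linarith, by linarith⟩
  have hf₀x₀ : 0 < f₀ x₀ := lt_of_lt_of_le hδ (hf_lb x₀ hx₀mem)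
  have hHx₀ : 0 < H x₀ := hHpos' x₀ (ne_of_gt hx₀t) hf₀x₀
  -- continuity of H at x₀
  have hf₀cont : ContinuousAt f₀ x₀ :=
    hf_cont.continuousAt (Icc_mem_nhds hx₀ab.1 hx₀ab.2)
  have hG : ContinuousAt (fun x => (p * l (x - c₁) + q * l (x - c₂) - l (x - cm)) * f₀ x) x₀ := by
    apply ContinuousAt.mul _ hf₀cont
    fun_prop
  have hHcont : ContinuousAt H x₀ := by
    refine hG.congr ?_
    have hmem : Set.Ioi t₀ ∈ nhds x₀ := Ioi_mem_nhds hx₀t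
    filter_upwards [hmem] with x hx
    have hsx : Real.sign (x - t₀) = 1 := Real.sign_of_pos (by simpa [sub_pos] using hx)
    simp only [hH, hφ, hsx, one_mul]
    ring
  -- find a small interval where H is large
  have hset : {x | H x₀ / 2 < H x} ∈ nhds x₀ := by
    have : Set.Ioi (H x₀ / 2) ∈ nhds (H x₀) := Ioi_mem_nhds (half_lt_self hHx₀)
    exact hHcont this
  obtain ⟨ε, hε, hball⟩ := Metric.mem_nhds_iff.mp hset
  set pp : ℝ := x₀ - ε / 2 with hpp
  set qq : ℝ := x₀ + ε / 2 with hqq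
  have hsubball : Set.Icc pp qq ⊆ {x | H x₀ / 2 < H x} := by
    intro x hx
    apply hball
    rw [Metric.mem_ball, Real.dist_eq, abs_sub_lt_iff]
    constructor <;> [skip; skip] <;> simp only [hpp, hqq] at hx ⊢ <;>
      [linarith [hx.2]; linarith [hx.1]]
  -- lower bound on the integral of H
  have h1 : ∫ x in Set.Icc pp qq, H x ≤ ∫ x, H x :=
    setIntegral_le_integral hHint (Filter.Eventually.of_forall hHnonneg)
  have h2 : (H x₀ / 2) * (volume (Set.Icc pp qq)).toReal ≤ ∫ x in Set.Icc pp qq, H x := by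
    refine setIntegral_ge_of_const_le_real measurableSet_Icc measure_Icc_lt_top.ne
      (fun x hx => (hsubball hx).le) hHint.integrableOn
  have hvol : (volume (Set.Icc pp qq)).toReal = ε := by
    rw [Real.volume_Icc, ENNReal.toReal_ofReal (by simp only [hpp, hqq]; linarith)]
    simp only [hpp, hqq]; ring
  have hIntHpos : 0 < ∫ x, H x := by
    have : 0 < (H x₀ / 2) * ε := by positivity
    calc (0 : ℝ) < (H x₀ / 2) * ε := this
      _ = (H x₀ / 2) * (volume (Set.Icc pp qq)).toReal := by rw [hvol]
      _ ≤ ∫ x in Set.Icc pp qq, H x := h2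
      _ ≤ ∫ x, H x := h1
  -- compute ∫ H
  have hIH : ∫ x, H x = p * (∫ x, φ c₁ x * f₀ x) + q * (∫ x, φ c₂ x * f₀ x)
      - ∫ x, φ cm x * f₀ x := by
    have h₁ := integral_add ((key_int c₁).const_mul p) ((key_int c₂).const_mul q)
      (μ := (volume : Measure ℝ))
    have h₂ := integral_sub (((key_int c₁).const_mul p).add ((key_int c₂).const_mul q))
      (key_int cm) (μ := (volume : Measure ℝ))
    simp only [hH, hφ, Pi.add_apply, Pi.sub_apply] at h₁ h₂ ⊢
    rw [h₂, h₁, integral_const_mul, integral_const_mul]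
  rw [hIH] at hIntHpos
  simp only [hφ, smul_eq_mul] at hIntHpos ⊢
  linarith
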